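/- Let m/n ∈ (0,1/2] be in lowest terms with m ≥ 2, and let κᵢ = ⌊in/m⌋ - ⌊(i-1)n/m⌋ - 2 for 2 ≤ i ≤ m, κ₁ = ⌊n/m⌋ - 1. Then for each r with 1 ≤ r ≤ m and each s with 1 ≤ s ≤ m + 1 - r, one has κᵣ + 1 + Σ_{i=r+1}^{r+s-1} κᵢ ≥ ⌊sn/m⌋ - (2s-1) = Σ_{i=1}^{s} κᵢ. -/

import Mathlib

lemma div_superadd (m n a b : ℕ) (hm : 0 < m) : a * n / m + b * n / m ≤ (a + b) * n / m := by
  rw [Nat.le_div_iff_mul_le hm, add_mul, add_mul]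
  have h1 := Nat.div_mul_le_self (a * n) m
  have h2 := Nat.div_mul_le_self (b * n) m
  omega

/-- κᵣ + 1 + Σ_{i=r+1}^{r+s-1} κᵢ ≥ ⌊sn/m⌋ - (2s-1) = Σ_{i=1}^{s} κᵢ. -/
theorem kappa_shift_sum_ge (m n : ℕ) (hm : 2 ≤ m) (hmn : Nat.Coprime m n) (h2 : 2 * m ≤ n)
    (κ : ℕ → ℤ)
    (hκ1 : κ 1 = ((n / m : ℕ) : ℤ) - 1)
    (hκ : ∀ i, 2 ≤ i → i ≤ m → κ i = ((i * n / m : ℕ) : ℤ) - ((i - 1) * n / m : ℕ) - 2)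
    (r s : ℕ) (hr1 : 1 ≤ r) (hrm : r ≤ m) (hs1 : 1 ≤ s) (hsm : s ≤ m + 1 - r) :
    κ r + 1 + ∑ i ∈ Finset.Icc (r + 1) (r + s - 1), κ i ≥ ((s * n / m : ℕ) : ℤ) - (2 * s - 1) ∧
    ((s * n / m : ℕ) : ℤ) - (2 * s - 1) = ∑ i ∈ Finset.Icc 1 s, κ i := by
  have hm0 : 0 < m := by omega
  -- telescoping lemma
  have tele : ∀ b a : ℕ, 1 ≤ a → a ≤ b → b ≤ m →
      ∑ i ∈ Finset.Icc (a + 1) b, κ i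
        = ((b * n / m : ℕ) : ℤ) - ((a * n / m : ℕ) : ℤ) - 2 * ((b : ℤ) - (a : ℤ)) := by
    intro b
    induction b with
    | zero => intro a h1 h2 _; omega
    | succ b ih =>
      intro a h1 h2 hbm
      rcases Nat.lt_or_ge a (b + 1) with hab | hab
      · have hab' : a ≤ b := by omega
        rw [Finset.sum_Icc_succ_top (by omega), ih a h1 hab' (by omega),
          hκ (b + 1) (by omega) hbm]
        have : b + 1 - 1 = b := rfl
        rw [this]
        push_cast
        ring
      · have : a = b + 1 := by omega
        subst this
        rw [Finset.Icc_eq_empty (by omega), Finset.sum_empty]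
        ring
  have hsm' : s ≤ m := by omega
  have hrsm : r + s - 1 ≤ m := by omega
  -- second part
  have part2 : ((s * n / m : ℕ) : ℤ) - (2 * s - 1) = ∑ i ∈ Finset.Icc 1 s, κ i := by
    have hins : Finset.Icc 1 s = insert 1 (Finset.Icc 2 s) := by
      ext x; simp; omega
    rw [hins, Finset.sum_insert (by simp)]
    rcases Nat.lt_or_ge s 2 with hs2 | hs2
    · have : s = 1 := by omega
      subst this
      rw [Finset.Icc_eq_empty (by omega), Finset.sum_empty, hκ1, one_mul]
      push_cast; ring
    · have := tele s 1 le_rfl (by omega) hsm'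
      rw [show (1:ℕ)+1 = 2 from rfl] at this
      rw [this, hκ1, one_mul]
      push_cast; ring
  refine ⟨?_, part2⟩
  rcases Nat.lt_or_ge r 2 with hr2 | hr2
  · have : r = 1 := by omega
    subst this
    have : 1 + s - 1 = s := by omega
    rw [this, show (1:ℕ)+1 = 2 from rfl]
    rcases Nat.lt_or_ge s 2 with hs2 | hs2
    · have : s = 1 := by omega
      subst this
      rw [Finset.Icc_eq_empty (by omega), Finset.sum_empty, hκ1, one_mul]
      push_cast; linarith
    · have ht := tele s 1 le_rfl (by omega) hsm'
      rw [show (1:ℕ)+1 = 2 from rfl] at ht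
      rw [ht, hκ1, one_mul]
      push_cast; linarith
  · -- r ≥ 2
    have hκr := hκ r hr2 hrm
    have ht := tele (r + s - 1) r hr1 (by omega) hrsm
    rw [show r + 1 = r + 1 from rfl] at ht
    rw [ht, hκr]
    -- superadditivity
    have hsup : (r - 1) * n / m + s * n / m ≤ (r - 1 + s) * n / m :=
      div_superadd m n (r - 1) s hm0
    have heq : r - 1 + s = r + s - 1 := by omega
    rw [heq] at hsup
    have hc : ((r - 1) * n / m : ℕ) + (s * n / m : ℕ) ≤ ((r + s - 1) * n / m : ℕ) := hsup
    have hc' : (((r - 1) * n / m : ℕ) : ℤ) + ((s * n / m : ℕ) : ℤ) ≤ (((r + s - 1) * n / m : ℕ) : ℤ) := by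
      exact_mod_cast hc
    have hcast : ((r + s - 1 : ℕ) : ℤ) = (r : ℤ) + s - 1 := by omega
    rw [hcast]
    push_cast
    linarith
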